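/- If (x_n) is a weakly null sequence in a Banach space X and (φ_n) is a bounded sequence in C(K), then (φ_n x_n) is weakly null in C(K, X). -/

import Mathlib

open Filter Topology

section Defs

variable {Z : Type*} [NormedAddCommGroup Z] [NormedSpace ℝ Z]

/-- A sequence is weakly null: every continuous linear functional sends it to a null sequence. -/
def WeaklyNull (x : ℕ → Z) : Prop :=
  ∀ f : Z →L[ℝ] ℝ, Tendsto (fun n => f (x n)) atTop (𝓝 (0 : ℝ))

/-- A sequence is weakly `p`-summable: every functional sends it into `ℓ_p`. -/
def WeaklyPSummable (p : ENNReal) (x : ℕ → Z) : Prop :=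
  ∀ f : Z →L[ℝ] ℝ, Memℓp (fun n => f (x n)) p

/-- A set is limited: every weak*-null sequence of functionals tends to `0` uniformly on it. -/
def IsLimitedSet (A : Set Z) : Prop :=
  ∀ g : ℕ → Z →L[ℝ] ℝ, (∀ z : Z, Tendsto (fun k => g k z) atTop (𝓝 (0 : ℝ))) →
    ∀ ε > 0, ∃ N, ∀ k ≥ N, ∀ a ∈ A, |g k a| < ε

/-- A set is a Dunford–Pettis set: every weakly null sequence of functionals tends to `0`
uniformly on it. -/
def IsDPSet (A : Set Z) : Prop :=
  ∀ g : ℕ → Z →L[ℝ] ℝ, WeaklyNull g →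
    ∀ ε > 0, ∃ N, ∀ k ≥ N, ∀ a ∈ A, |g k a| < ε

end Defs

open MeasureTheory Set TopologicalSpace
open scoped NNReal ENNReal

section RMK

variable {Ω : Type*} [TopologicalSpace Ω] [CompactSpace Ω] [T2Space Ω]

namespace StmtFiveAux

/-- The set of values of `Λ` on functions that are nonneg and `≥ 1` on `Kc`. -/
def feas (Λ : C(Ω, ℝ) →ₗ[ℝ] ℝ) (Kc : Set Ω) : Set ℝ :=
  {r | ∃ g : C(Ω, ℝ), (∀ ω, 0 ≤ g ω) ∧ (∀ ω ∈ Kc, 1 ≤ g ω) ∧ Λ g = r}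

noncomputable def lam (Λ : C(Ω, ℝ) →ₗ[ℝ] ℝ) (Kc : Set Ω) : ℝ := sInf (feas Λ Kc)

variable {Λ : C(Ω, ℝ) →ₗ[ℝ] ℝ} (hΛ : ∀ h : C(Ω, ℝ), (∀ ω, 0 ≤ h ω) → 0 ≤ Λ h)
include hΛ

theorem lmono {f g : C(Ω, ℝ)} (h : ∀ ω, f ω ≤ g ω) : Λ f ≤ Λ g := by
  have := hΛ (g - f) (fun ω => by simpa using sub_nonneg.2 (h ω))
  rw [map_sub] at this; linarith

omit hΛ in
theorem feas_nonempty (Kc : Set Ω) : (feas Λ Kc).Nonempty :=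
  ⟨Λ 1, 1, fun ω => by norm_num, fun ω _ => by norm_num, rfl⟩

theorem feas_nonneg {Kc : Set Ω} {r : ℝ} (hr : r ∈ feas Λ Kc) : 0 ≤ r := by
  obtain ⟨g, hg0, _, rfl⟩ := hr; exact hΛ g hg0

theorem feas_bddBelow (Kc : Set Ω) : BddBelow (feas Λ Kc) :=
  ⟨0, fun r hr => feas_nonneg hΛ hr⟩

theorem lam_nonneg (Kc : Set Ω) : 0 ≤ lam Λ Kc :=
  le_csInf (feas_nonempty Kc) (fun r hr => feas_nonneg hΛ hr)

theorem lam_mono {K₁ K₂ : Set Ω} (h : K₁ ⊆ K₂) : lam Λ K₁ ≤ lam Λ K₂ :=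
  csInf_le_csInf (feas_bddBelow hΛ K₁) (feas_nonempty K₂)
    (fun r ⟨g, h0, h1, he⟩ => ⟨g, h0, fun ω hω => h1 ω (h hω), he⟩)

/-- Key upper bound on `Λ g` for `g` supported in `Kc`, bounded by `c`. -/
theorem lam_ge {Kc : Set Ω} {g : C(Ω, ℝ)} {c : ℝ} (hc : 0 < c)
    (hg0 : ∀ ω, 0 ≤ g ω) (hgc : ∀ ω, g ω ≤ c) (hsupp : ∀ ω, g ω ≠ 0 → ω ∈ Kc) :
    Λ g ≤ c * lam Λ Kc := by
  have H : ∀ r ∈ feas Λ Kc, Λ g ≤ c * r := by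
    rintro r ⟨f, hf0, hf1, rfl⟩
    have : ∀ ω, g ω ≤ (c • f) ω := by
      intro ω
      by_cases hω : g ω = 0
      · simp only [ContinuousMap.smul_apply, smul_eq_mul, hω]
        exact mul_nonneg hc.le (hf0 ω)
      · have h1 := hf1 ω (hsupp ω hω)
        have := hgc ω
        simp only [ContinuousMap.smul_apply, smul_eq_mul]
        nlinarith
    calc Λ g ≤ Λ (c • f) := lmono hΛ this
    _ = c * Λ f := by rw [Λ.map_smul]; rfl
  have : Λ g / c ≤ lam Λ Kc :=
    le_csInf (feas_nonempty Kc) (fun r hr => (div_le_iff₀' hc).2 (H r hr))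
  calc Λ g = c * (Λ g / c) := by field_simp
  _ ≤ c * lam Λ Kc := by nlinarith [this]

theorem lam_union_le (K₁ K₂ : Set Ω) :
    lam Λ (K₁ ∪ K₂) ≤ lam Λ K₁ + lam Λ K₂ := by
  have H : ∀ r₁ ∈ feas Λ K₁, ∀ r₂ ∈ feas Λ K₂, lam Λ (K₁ ∪ K₂) ≤ r₁ + r₂ := by
    rintro r₁ ⟨f₁, h₁0, h₁1, rfl⟩ r₂ ⟨f₂, h₂0, h₂1, rfl⟩
    refine csInf_le (feas_bddBelow hΛ _) ⟨f₁ + f₂, ?_, ?_, map_add _ _ _⟩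
    · intro ω; simpa using add_nonneg (h₁0 ω) (h₂0 ω)
    · rintro ω (hω | hω) <;> simp only [ContinuousMap.add_apply]
      · linarith [h₁1 ω hω, h₂0 ω]
      · linarith [h₂1 ω hω, h₁0 ω]
  rw [← sub_le_iff_le_add']
  refine le_csInf (feas_nonempty K₂) (fun r₂ h₂ => ?_)
  rw [sub_le_iff_le_add', ← sub_le_iff_le_add]
  exact le_csInf (feas_nonempty K₁) (fun r₁ h₁ => sub_le_iff_le_add.2 (H r₁ h₁ r₂ h₂))

theorem lam_union_eq {K₁ K₂ : Set Ω} (hK₁ : IsCompact K₁) (hK₂ : IsCompact K₂)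
    (hd : Disjoint K₁ K₂) : lam Λ (K₁ ∪ K₂) = lam Λ K₁ + lam Λ K₂ := by
  refine le_antisymm (lam_union_le hΛ K₁ K₂) ?_
  refine le_csInf (feas_nonempty _) ?_
  rintro r ⟨f, hf0, hf1, rfl⟩
  obtain ⟨u, hu2, hu1, hu01⟩ :=
    exists_continuous_zero_one_of_isClosed hK₂.isClosed hK₁.isClosed hd.symm
  have key : Λ (f * u) + Λ (f * (1 - u)) = Λ f := by
    rw [← map_add]; congr 1; ext ω; simp; ring
  have l1 : lam Λ K₁ ≤ Λ (f * u) := by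
    refine csInf_le (feas_bddBelow hΛ _) ⟨f * u, ?_, ?_, rfl⟩
    · intro ω; simp only [ContinuousMap.mul_apply]
      exact mul_nonneg (hf0 ω) (hu01 ω).1
    · intro ω hω
      have : u ω = 1 := hu1 hω
      simp only [ContinuousMap.mul_apply, this, mul_one]
      exact hf1 ω (Or.inl hω)
  have l2 : lam Λ K₂ ≤ Λ (f * (1 - u)) := by
    refine csInf_le (feas_bddBelow hΛ _) ⟨f * (1 - u), ?_, ?_, rfl⟩
    · intro ω; simp only [ContinuousMap.mul_apply, ContinuousMap.sub_apply,
        ContinuousMap.one_apply]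
      exact mul_nonneg (hf0 ω) (by linarith [(hu01 ω).2])
    · intro ω hω
      have : u ω = 0 := hu2 hω
      simp only [ContinuousMap.mul_apply, ContinuousMap.sub_apply,
        ContinuousMap.one_apply, this]
      simpa using hf1 ω (Or.inr hω)
  linarith

/-- The content associated to a positive linear functional. -/
noncomputable def rContent : Content Ω where
  toFun Kc := Real.toNNReal (lam Λ Kc)
  mono' K₁ K₂ h := Real.toNNReal_mono (lam_mono hΛ h)
  sup_disjoint' K₁ K₂ hd _ _ := by
    simp only [Compacts.coe_sup]
    rw [lam_union_eq hΛ K₁.isCompact K₂.isCompact hd,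
      Real.toNNReal_add (lam_nonneg hΛ _) (lam_nonneg hΛ _)]
  sup_le' K₁ K₂ := by
    simp only [Compacts.coe_sup]
    exact le_trans (Real.toNNReal_mono (lam_union_le hΛ (↑K₁) (↑K₂)))
      Real.toNNReal_add_le

end StmtFiveAux

open StmtFiveAux in
/-- Mini Riesz–Markov: a positive linear functional on `C(Ω, ℝ)` is dominated by
integration against a finite Borel measure. -/
theorem exists_dominating_measure [MeasurableSpace Ω] [BorelSpace Ω]
    (Λ : C(Ω, ℝ) →ₗ[ℝ] ℝ) (hΛ : ∀ h : C(Ω, ℝ), (∀ ω, 0 ≤ h ω) → 0 ≤ Λ h) :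
    ∃ μ : Measure Ω, IsFiniteMeasure μ ∧
      ∀ h : C(Ω, ℝ), (∀ ω, 0 ≤ h ω) → Λ h ≤ ∫ ω, h ω ∂μ := by
  set κ : Content Ω := rContent hΛ with hκ
  set μ := κ.measure with hμ
  have hopen : ∀ U : Opens Ω, μ U = κ.innerContent U := by
    intro U
    rw [hμ, Content.measure_apply _ U.isOpen.measurableSet]
    exact κ.outerMeasure_opens U
  have hfin : IsFiniteMeasure μ := by
    constructor
    rw [show (univ : Set Ω) = ((⟨univ, isOpen_univ⟩ : Opens Ω) : Set Ω) from rfl, hopen]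
    exact lt_of_le_of_lt (κ.innerContent_le ⟨univ, isOpen_univ⟩ ⟨univ, isCompact_univ⟩
      (subset_refl _)) ENNReal.coe_lt_top
  refine ⟨μ, hfin, ?_⟩
  -- the key inequality
  intro h hpos
  classical
  have hμfin : ∀ s : Set Ω, μ s ≠ ⊤ := fun s => (measure_lt_top μ s).ne
  have lam_le_meas : ∀ (Kc : Set Ω) (hKc : IsCompact Kc) (U : Opens Ω), Kc ⊆ (U : Set Ω) →
      lam Λ Kc ≤ (μ (U : Set Ω)).toReal := by
    intro Kc hKc U hsub
    have h1 : ((κ.toFun ⟨Kc, hKc⟩ : ℝ≥0) : ℝ≥0∞) ≤ μ (U : Set Ω) := by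
      rw [hopen U]; exact κ.le_innerContent ⟨Kc, hKc⟩ U hsub
    have h2 : ((κ.toFun ⟨Kc, hKc⟩ : ℝ≥0) : ℝ) = lam Λ Kc := by
      rw [hκ]; exact Real.coe_toNNReal _ (lam_nonneg hΛ _)
    calc lam Λ Kc = ((κ.toFun ⟨Kc, hKc⟩ : ℝ≥0) : ℝ) := h2.symm
      _ ≤ (μ (U : Set Ω)).toReal := by
          rw [← ENNReal.coe_toReal]
          exact ENNReal.toReal_mono (hμfin _) h1
  have hint : Integrable (fun ω => h ω) μ :=
    h.continuous.integrable_of_hasCompactSupport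
      (IsCompact.of_isClosed_subset isCompact_univ (isClosed_tsupport _) (subset_univ _))
  set c : ℝ := (μ univ).toReal with hc
  have hc0 : 0 ≤ c := ENNReal.toReal_nonneg
  suffices main : ∀ ε₀ : ℝ, 0 < ε₀ → Λ h ≤ (∫ ω, h ω ∂μ) + ε₀ by
    by_contra hcon
    push_neg at hcon
    have := main ((Λ h - ∫ ω, h ω ∂μ) / 2) (by linarith)
    linarith
  intro ε₀ hε₀
  set ε : ℝ := ε₀ / (2 * c + 1) with hε
  have hεpos : 0 < ε := div_pos hε₀ (by linarith)
  -- the layers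
  have hcont : ∀ i : ℕ, Continuous fun ω => min (h ω) (((i : ℝ) + 1) * ε) - min (h ω) ((i : ℝ) * ε) :=
    fun i => (h.continuous.min continuous_const).sub (h.continuous.min continuous_const)
  set g : ℕ → C(Ω, ℝ) := fun i => ⟨_, hcont i⟩ with hg
  obtain ⟨N₀, hN₀⟩ := exists_nat_ge (‖h‖ / ε)
  set N : ℕ := N₀ + 1 with hN
  have hhN : ∀ ω, h ω ≤ (N : ℝ) * ε := by
    intro ω
    have h1 : h ω ≤ ‖h‖ := le_trans (le_abs_self _) (h.norm_coe_le_norm ω)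
    have h2 : ‖h‖ ≤ (N : ℝ) * ε := by
      rw [← div_le_iff₀ hεpos]
      have : (N₀ : ℝ) ≤ (N : ℝ) := by exact_mod_cast Nat.le_succ N₀
      linarith
    linarith
  have hsum : h = ∑ i ∈ Finset.range N, g i := by
    ext ω
    have e1 : (∑ i ∈ Finset.range N, g i) ω = ∑ i ∈ Finset.range N,
        (min (h ω) (((i : ℝ) + 1) * ε) - min (h ω) ((i : ℝ) * ε)) := by
      rw [ContinuousMap.coe_sum]
      simp [hg]
    have e2 := Finset.sum_range_sub (fun i => min (h ω) ((i : ℝ) * ε)) N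
    simp only [Nat.cast_add, Nat.cast_one, Nat.cast_zero, zero_mul] at e2
    rw [e1, e2, min_eq_left (hhN ω), min_eq_right (hpos ω)]
    ring
  -- the open sets
  set W : ℕ → Opens Ω := fun j => ⟨{ω | (j : ℝ) * ε < h ω},
    isOpen_lt continuous_const h.continuous⟩ with hW
  set V : ℕ → Opens Ω := fun i => if i ≤ 1 then ⟨univ, isOpen_univ⟩ else W (i - 1) with hV
  -- bound each layer
  have claimA : ∀ i : ℕ, Λ (g i) ≤ ε * (μ ((V i : Opens Ω) : Set Ω)).toReal := by
    intro i
    set Kc : Set Ω := {ω | (i : ℝ) * ε ≤ h ω} with hKc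
    have hKcc : IsCompact Kc :=
      (isClosed_le continuous_const h.continuous).isCompact
    have hg0 : ∀ ω, 0 ≤ g i ω := by
      intro ω
      simp only [hg, ContinuousMap.coe_mk, sub_nonneg]
      exact min_le_min (le_refl _) (by nlinarith)
    have hgε : ∀ ω, g i ω ≤ ε := by
      intro ω
      simp only [hg, ContinuousMap.coe_mk]
      rcases le_total (h ω) ((i : ℝ) * ε) with hcase | hcase
      · rw [min_eq_left (by nlinarith), min_eq_left hcase]
        linarith
      · rw [min_eq_right hcase]
        have := min_le_right (h ω) (((i : ℝ) + 1) * ε)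
        linarith
    have hsupp : ∀ ω, g i ω ≠ 0 → ω ∈ Kc := by
      intro ω hne
      by_contra hmem
      apply hne
      have : h ω < (i : ℝ) * ε := by simpa [hKc] using hmem
      simp only [hg, ContinuousMap.coe_mk]
      rw [min_eq_left (by nlinarith), min_eq_left (by nlinarith)]
      ring
    have step1 : Λ (g i) ≤ ε * lam Λ Kc := lam_ge hΛ hεpos hg0 hgε hsupp
    have step2 : lam Λ Kc ≤ (μ ((V i : Opens Ω) : Set Ω)).toReal := by
      apply lam_le_meas Kc hKcc
      rcases le_or_gt i 1 with h1 | h1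
      · simp [hV, h1]
      · have : ¬ i ≤ 1 := not_le.2 h1
        simp only [hV, this, if_false]
        intro ω hω
        have hωKc : (i : ℝ) * ε ≤ h ω := hω
        have hcast : ((i - 1 : ℕ) : ℝ) = (i : ℝ) - 1 := by
          rw [Nat.cast_sub (by omega)]; norm_num
        show ((i - 1 : ℕ) : ℝ) * ε < h ω
        rw [hcast]
        nlinarith [hεpos, hωKc]
    calc Λ (g i) ≤ ε * lam Λ Kc := step1
      _ ≤ ε * (μ ((V i : Opens Ω) : Set Ω)).toReal :=
        mul_le_mul_of_nonneg_left step2 hεpos.le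
  -- sum the bounds
  have claimB : ∀ i ∈ Finset.range N, ε * (μ ((V i : Opens Ω) : Set Ω)).toReal ≤
      ((if i = 0 then ε * c else 0) + (if i = 1 then ε * c else 0)) +
        (if 2 ≤ i then ε else 0) * (μ ((W (i - 1) : Opens Ω) : Set Ω)).toReal := by
    intro i _
    rcases Nat.lt_or_ge i 2 with h2 | h2
    · have hle : (μ ((V i : Opens Ω) : Set Ω)).toReal ≤ c := by
        rw [hc]
        exact ENNReal.toReal_mono (hμfin _) (measure_mono (subset_univ _))
      have hni : ¬ 2 ≤ i := by omega
      rcases (by omega : i = 0 ∨ i = 1) with rfl | rfl <;>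
        · simp only [hni, reduceIte, if_true, if_false, zero_mul, add_zero, zero_add,
            one_ne_zero, zero_ne_one, if_neg, if_pos]
          nlinarith
    · have h0 : ¬ i = 0 := by omega
      have h1 : ¬ i = 1 := by omega
      have hle : ¬ i ≤ 1 := by omega
      simp only [h0, h1, h2, hV, hle, if_false, if_true, zero_add, reduceIte, ite_mul,
        zero_mul]
      exact le_rfl
  -- Claim C : the filtered sum is at most the integral of h
  set T : ℕ → Ω → ℝ := fun i ω =>
    (if 2 ≤ i then ε else 0) * ((W (i - 1) : Opens Ω) : Set Ω).indicator (fun _ => (1 : ℝ)) ω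
    with hT
  have hTmeas : ∀ i : ℕ, MeasurableSet ((W (i - 1) : Opens Ω) : Set Ω) :=
    fun i => (W (i - 1)).isOpen.measurableSet
  have hTint : ∀ i : ℕ, Integrable (T i) μ := by
    intro i
    apply Integrable.const_mul
    rw [integrable_indicator_iff (hTmeas i)]
    exact integrableOn_const (measure_lt_top μ _).ne
  have hTval : ∀ i : ℕ, ∫ ω, T i ω ∂μ =
      (if 2 ≤ i then ε else 0) * (μ ((W (i - 1) : Opens Ω) : Set Ω)).toReal := by
    intro i
    simp only [hT]
    rw [MeasureTheory.integral_const_mul, integral_indicator_const (1 : ℝ) (hTmeas i)]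
    simp [Measure.real]
  have hTsum_le : ∀ ω, (∑ i ∈ Finset.range N, T i ω) ≤ h ω := by
    intro ω
    have e : ∀ i : ℕ, T i ω =
        if 2 ≤ i ∧ ω ∈ ((W (i - 1) : Opens Ω) : Set Ω) then ε else 0 := by
      intro i
      simp only [hT, Set.indicator_apply]
      by_cases h2 : 2 ≤ i <;> by_cases hw : ω ∈ ((W (i - 1) : Opens Ω) : Set Ω) <;>
        simp [h2, hw]
    rw [Finset.sum_congr rfl (fun i _ => e i), ← Finset.sum_filter]
    set A := (Finset.range N).filter
      (fun i => 2 ≤ i ∧ ω ∈ ((W (i - 1) : Opens Ω) : Set Ω)) with hA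
    rw [Finset.sum_const, nsmul_eq_mul]
    set m := ⌊h ω / ε⌋₊ with hm
    have hsubA : A ⊆ Finset.Icc 2 (m + 1) := by
      intro i hi
      rw [hA, Finset.mem_filter] at hi
      obtain ⟨_, h2i, hwi⟩ := hi
      simp only [hW, Opens.coe_mk, Set.mem_setOf_eq] at hwi
      have hle : ((i - 1 : ℕ) : ℝ) ≤ h ω / ε := by
        rw [le_div_iff₀ hεpos]; linarith
      have him : i - 1 ≤ m := Nat.le_floor hle
      exact Finset.mem_Icc.2 ⟨h2i, by omega⟩
    have hcard : A.card ≤ m := by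
      have := Finset.card_le_card hsubA
      rw [Nat.card_Icc] at this; omega
    calc (A.card : ℝ) * ε ≤ (m : ℝ) * ε := by
          apply mul_le_mul_of_nonneg_right _ hεpos.le
          exact_mod_cast hcard
      _ ≤ (h ω / ε) * ε := by
          apply mul_le_mul_of_nonneg_right _ hεpos.le
          exact Nat.floor_le (div_nonneg (hpos ω) hεpos.le)
      _ = h ω := div_mul_cancel₀ _ hεpos.ne'
  have hS : ∑ i ∈ Finset.range N,
      (if 2 ≤ i then ε else 0) * (μ ((W (i - 1) : Opens Ω) : Set Ω)).toReal ≤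
        ∫ ω, h ω ∂μ := by
    calc ∑ i ∈ Finset.range N,
        (if 2 ≤ i then ε else 0) * (μ ((W (i - 1) : Opens Ω) : Set Ω)).toReal
        = ∑ i ∈ Finset.range N, ∫ ω, T i ω ∂μ :=
          (Finset.sum_congr rfl (fun i _ => (hTval i).symm))
      _ = ∫ ω, (∑ i ∈ Finset.range N, T i ω) ∂μ :=
          (integral_finset_sum _ (fun i _ => hTint i)).symm
      _ ≤ ∫ ω, h ω ∂μ :=
          integral_mono (integrable_finset_sum _ (fun i _ => hTint i)) hint hTsum_le
  -- assembly
  have e0 : ∑ i ∈ Finset.range N, (if i = 0 then ε * c else 0) ≤ ε * c := by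
    rw [Finset.sum_ite_eq' (Finset.range N) 0 (fun _ => ε * c)]
    split_ifs
    · exact le_rfl
    · positivity
  have e1 : ∑ i ∈ Finset.range N, (if i = 1 then ε * c else 0) ≤ ε * c := by
    rw [Finset.sum_ite_eq' (Finset.range N) 1 (fun _ => ε * c)]
    split_ifs
    · exact le_rfl
    · positivity
  have final : Λ h ≤ 2 * (ε * c) + ∫ ω, h ω ∂μ := by
    have hΛsum : Λ h = ∑ i ∈ Finset.range N, Λ (g i) := by
      conv_lhs => rw [hsum]
      rw [map_sum]
    rw [hΛsum]
    calc ∑ i ∈ Finset.range N, Λ (g i)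
        ≤ ∑ i ∈ Finset.range N, ε * (μ ((V i : Opens Ω) : Set Ω)).toReal :=
          Finset.sum_le_sum (fun i _ => claimA i)
      _ ≤ ∑ i ∈ Finset.range N,
            (((if i = 0 then ε * c else 0) + (if i = 1 then ε * c else 0)) +
              (if 2 ≤ i then ε else 0) * (μ ((W (i - 1) : Opens Ω) : Set Ω)).toReal) :=
          Finset.sum_le_sum claimB
      _ = (∑ i ∈ Finset.range N, (if i = 0 then ε * c else 0)) +
            (∑ i ∈ Finset.range N, (if i = 1 then ε * c else 0)) +
            ∑ i ∈ Finset.range N,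
              (if 2 ≤ i then ε else 0) * (μ ((W (i - 1) : Opens Ω) : Set Ω)).toReal := by
          rw [Finset.sum_add_distrib, Finset.sum_add_distrib]
      _ ≤ 2 * (ε * c) + ∫ ω, h ω ∂μ := by linarith
  have hεc : 2 * (ε * c) ≤ ε₀ := by
    have h1 : 2 * c / (2 * c + 1) ≤ 1 := by
      rw [div_le_one (by linarith)]; linarith
    calc 2 * (ε * c) = ε₀ * (2 * c / (2 * c + 1)) := by
          rw [hε]; ring
      _ ≤ ε₀ * 1 := mul_le_mul_of_nonneg_left h1 hε₀.le
      _ = ε₀ := mul_one _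
  linarith

end RMK


section Main

open NormedSpace

theorem weaklyNull_bounded {X : Type*} [NormedAddCommGroup X] [NormedSpace ℝ X]
    (x : ℕ → X) (hx : WeaklyNull x) : ∃ C : ℝ, 0 ≤ C ∧ ∀ n, ‖x n‖ ≤ C := by
  set T : ℕ → StrongDual ℝ (StrongDual ℝ X) := fun n => NormedSpace.inclusionInDoubleDualLi ℝ (x n) with hT
  have hpt : ∀ ψ : StrongDual ℝ X, ∃ C, ∀ n, ‖T n ψ‖ ≤ C := by
    intro ψ
    have h1 : Tendsto (fun n => ‖ψ (x n)‖) atTop (𝓝 0) := by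
      simpa using (hx ψ).norm
    obtain ⟨C, hC⟩ := h1.bddAbove_range
    refine ⟨C, fun n => ?_⟩
    have : ‖ψ (x n)‖ ∈ Set.range fun n => ‖ψ (x n)‖ := Set.mem_range_self n
    have h2 := hC this
    have he : T n ψ = ψ (x n) := rfl
    rw [he]; exact h2
  obtain ⟨C', hC'⟩ := banach_steinhaus hpt
  refine ⟨max C' 0, le_max_right _ _, fun n => ?_⟩
  have : ‖x n‖ = ‖T n‖ := (NormedSpace.inclusionInDoubleDualLi ℝ (E := X)).norm_map (x n) |>.symm
  rw [this]
  exact le_trans (hC' n) (le_max_left _ _)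

end Main

set_option maxHeartbeats 1000000 in
theorem stmt5 {K X : Type*} [TopologicalSpace K] [CompactSpace K] [T2Space K]
    [NormedAddCommGroup X] [NormedSpace ℝ X] [CompleteSpace X]
    (x : ℕ → X) (hx : WeaklyNull x)
    (φ : ℕ → C(K, ℝ)) (M : ℝ) (hφ : ∀ n, ‖φ n‖ ≤ M) :
    WeaklyNull (fun n => ContinuousMap.mk (fun t => φ n t • x n)
      ((map_continuous (φ n)).smul continuous_const)) := by
  classical
  intro f
  rcases isEmpty_or_nonempty K with hKe | hKne
  · have hz : ∀ n, (ContinuousMap.mk (fun t => φ n t • x n)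
        ((map_continuous (φ n)).smul continuous_const)) = (0 : C(K, X)) := by
      intro n; ext t; exact (IsEmpty.false t).elim
    simp only [hz, map_zero]
    exact tendsto_const_nhds
  obtain ⟨t₀⟩ := hKne
  haveI : Nonempty K := ⟨t₀⟩
  obtain ⟨C₀, hC₀0, hC₀⟩ := weaklyNull_bounded x hx
  have hM0 : (0 : ℝ) ≤ M := le_trans (norm_nonneg (φ 0)) (hφ 0)
  set B : Set (WeakDual ℝ X) := WeakDual.toStrongDual ⁻¹' Metric.closedBall 0 1 with hB
  have h0B : (0 : WeakDual ℝ X) ∈ B := by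
    simp [hB, Metric.mem_closedBall]
  haveI : CompactSpace B := isCompact_iff_compactSpace.mp (WeakDual.isCompact_closedBall (𝕜 := ℝ) (E := X) 0 1)
  haveI : Nonempty B := ⟨⟨0, h0B⟩⟩
  have hψnorm : ∀ ψ : B, ‖WeakDual.toStrongDual (ψ : WeakDual ℝ X)‖ ≤ 1 := by
    intro ψ
    exact mem_closedBall_zero_iff.mp ψ.2
  -- the embedding J
  have hcontJ : ∀ g : C(K, X), Continuous fun p : K × B => (p.2 : WeakDual ℝ X) (g p.1) := by
    intro g
    rw [continuous_iff_continuousAt]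
    intro p₀
    rw [ContinuousAt, tendsto_iff_dist_tendsto_zero]
    have h1 : Tendsto (fun p : K × B => ‖g p.1 - g p₀.1‖) (𝓝 p₀) (𝓝 0) := by
      have hc : Tendsto (fun p : K × B => g p.1) (𝓝 p₀) (𝓝 (g p₀.1)) :=
        ((g.continuous.comp continuous_fst).tendsto p₀)
      simpa using (hc.sub (tendsto_const_nhds (x := g p₀.1))).norm
    have h2 : Tendsto (fun p : K × B =>
        |(p.2 : WeakDual ℝ X) (g p₀.1) - (p₀.2 : WeakDual ℝ X) (g p₀.1)|) (𝓝 p₀) (𝓝 0) := by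
      have hev : Continuous fun ψ : WeakDual ℝ X => ψ (g p₀.1) := WeakDual.eval_continuous _
      have hc : Tendsto (fun p : K × B => (p.2 : WeakDual ℝ X) (g p₀.1)) (𝓝 p₀)
          (𝓝 ((p₀.2 : WeakDual ℝ X) (g p₀.1))) :=
        (((hev.comp continuous_subtype_val).comp continuous_snd).tendsto p₀)
      simpa using (hc.sub (tendsto_const_nhds (x := (p₀.2 : WeakDual ℝ X) (g p₀.1)))).abs
    refine squeeze_zero (fun p => dist_nonneg) (fun p => ?_) (by simpa using h1.add h2)
    have e : (p.2 : WeakDual ℝ X) (g p.1) - (p₀.2 : WeakDual ℝ X) (g p₀.1)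
        = (WeakDual.toStrongDual (p.2 : WeakDual ℝ X)) (g p.1 - g p₀.1)
          + ((p.2 : WeakDual ℝ X) (g p₀.1) - (p₀.2 : WeakDual ℝ X) (g p₀.1)) := by
      rw [map_sub]
      have : ∀ v : X, (WeakDual.toStrongDual (p.2 : WeakDual ℝ X)) v
          = (p.2 : WeakDual ℝ X) v := fun v => rfl
      rw [this, this]; ring
    rw [Real.dist_eq, e]
    refine le_trans (abs_add_le _ _) (add_le_add ?_ le_rfl)
    calc |(WeakDual.toStrongDual (p.2 : WeakDual ℝ X)) (g p.1 - g p₀.1)|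
        ≤ ‖WeakDual.toStrongDual (p.2 : WeakDual ℝ X)‖ * ‖g p.1 - g p₀.1‖ :=
          (WeakDual.toStrongDual (p.2 : WeakDual ℝ X)).le_opNorm _
      _ ≤ 1 * ‖g p.1 - g p₀.1‖ :=
          mul_le_mul_of_nonneg_right (hψnorm p.2) (norm_nonneg _)
      _ = ‖g p.1 - g p₀.1‖ := one_mul _
  set J : C(K, X) →ₗ[ℝ] C(K × B, ℝ) :=
    { toFun := fun g => ⟨fun p => (p.2 : WeakDual ℝ X) (g p.1), hcontJ g⟩
      map_add' := by intro g₁ g₂; ext p; simp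
      map_smul' := by intro c g; ext p; simp } with hJ
  have hJapp : ∀ (g : C(K, X)) (p : K × B), J g p = (p.2 : WeakDual ℝ X) (g p.1) :=
    fun g p => rfl
  -- the sublinear functional
  set NN : C(K × B, ℝ) → ℝ := fun u => ‖f‖ * sSup (Set.range u) with hNN
  have hrange_ne : ∀ u : C(K × B, ℝ), (Set.range ⇑u).Nonempty := fun u => Set.range_nonempty _
  have hrange_bdd : ∀ u : C(K × B, ℝ), BddAbove (Set.range ⇑u) :=
    fun u => (isCompact_range u.continuous).bddAbove
  have hNhom : ∀ c : ℝ, 0 < c → ∀ u : C(K × B, ℝ), NN (c • u) = c * NN u := by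
    intro c hc u
    have hmono : Monotone fun r : ℝ => c * r :=
      fun a b hab => mul_le_mul_of_nonneg_left hab hc.le
    have e : Set.range ⇑(c • u) = (fun r => c * r) '' Set.range ⇑u := by
      rw [show ⇑(c • u) = (fun r => c * r) ∘ ⇑u from ?_, Set.range_comp]
      ext p; simp
    rw [hNN]
    simp only []
    rw [e, ← hmono.map_csSup_of_continuousAt
      ((continuous_mul_left c).continuousAt) (hrange_ne u) (hrange_bdd u)]
    ring
  have hNadd : ∀ u v : C(K × B, ℝ), NN (u + v) ≤ NN u + NN v := by
    intro u v
    rw [hNN]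
    simp only []
    rw [← mul_add]
    refine mul_le_mul_of_nonneg_left ?_ (norm_nonneg f)
    refine csSup_le (hrange_ne _) ?_
    rintro r ⟨p, rfl⟩
    calc (u + v) p = u p + v p := rfl
      _ ≤ sSup (Set.range ⇑u) + sSup (Set.range ⇑v) :=
          add_le_add (le_csSup (hrange_bdd u) (Set.mem_range_self p))
            (le_csSup (hrange_bdd v) (Set.mem_range_self p))
  -- the domination f g ≤ NN (J g)
  have hfg : ∀ g : C(K, X), f g ≤ NN (J g) := by
    intro g
    have hnn : 0 ≤ sSup (Set.range ⇑(J g)) := by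
      refine le_csSup (hrange_bdd _) ⟨(t₀, ⟨0, h0B⟩), ?_⟩
      rw [hJapp]; rfl
    have h2 : ‖g‖ ≤ sSup (Set.range ⇑(J g)) := by
      rw [ContinuousMap.norm_le g hnn]
      intro t
      by_cases hgt : g t = 0
      · rw [hgt, norm_zero]; exact hnn
      · obtain ⟨ψ, hψ1, hψx⟩ := exists_dual_vector ℝ (g t) (norm_ne_zero_iff.mpr hgt)
        have hmemψ : StrongDual.toWeakDual ψ ∈ B := by
          refine mem_closedBall_zero_iff.mpr ?_
          show ‖ψ‖ ≤ 1
          rw [hψ1]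
        have heval : (J g) (t, ⟨StrongDual.toWeakDual ψ, hmemψ⟩) = ‖g t‖ := by
          rw [hJapp]
          show ψ (g t) = ‖g t‖
          exact_mod_cast hψx
        calc ‖g t‖ = (J g) (t, ⟨StrongDual.toWeakDual ψ, hmemψ⟩) := heval.symm
          _ ≤ sSup (Set.range ⇑(J g)) := le_csSup (hrange_bdd _) (Set.mem_range_self _)
    calc f g ≤ ‖f g‖ := le_abs_self _
      _ ≤ ‖f‖ * ‖g‖ := f.le_opNorm g
      _ ≤ ‖f‖ * sSup (Set.range ⇑(J g)) := mul_le_mul_of_nonneg_left h2 (norm_nonneg f)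
  -- injectivity of J
  have hJinj : Function.Injective J := by
    intro g₁ g₂ he
    ext t
    by_contra hne
    have hsub : g₁ t - g₂ t ≠ 0 := sub_ne_zero.2 hne
    obtain ⟨ψ, hψ1, hψx⟩ := exists_dual_vector ℝ _ (norm_ne_zero_iff.mpr hsub)
    have hmemψ : StrongDual.toWeakDual ψ ∈ B := by
      refine mem_closedBall_zero_iff.mpr ?_
      show ‖ψ‖ ≤ 1
      rw [hψ1]
    have h1 : (J g₁) (t, ⟨StrongDual.toWeakDual ψ, hmemψ⟩)
        = (J g₂) (t, ⟨StrongDual.toWeakDual ψ, hmemψ⟩) := by rw [he]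
    rw [hJapp, hJapp] at h1
    have h2 : ψ (g₁ t - g₂ t) = 0 := by
      rw [map_sub]
      have : ψ (g₁ t) = ψ (g₂ t) := h1
      linarith
    rw [hψx] at h2
    exact hsub (by simpa using h2)
  -- Hahn-Banach extension
  obtain ⟨F, hFJ, hFle⟩ : ∃ F : C(K × B, ℝ) →ₗ[ℝ] ℝ,
      (∀ g : C(K, X), F (J g) = f g) ∧ ∀ u, F u ≤ NN u := by
    set dom : Submodule ℝ C(K × B, ℝ) := LinearMap.range J with hdom
    set eqv : C(K, X) ≃ₗ[ℝ] ↥dom := LinearEquiv.ofInjective J hJinj with heqv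
    set pm : C(K × B, ℝ) →ₗ.[ℝ] ℝ :=
      ⟨dom, ((f : C(K, X) →L[ℝ] ℝ) : C(K, X) →ₗ[ℝ] ℝ).comp eqv.symm.toLinearMap⟩ with hpm
    have hpmval : ∀ y : ↥dom, pm y = f (eqv.symm y) := fun y => rfl
    have hcoe : ∀ g : C(K, X), ((eqv g : ↥dom) : C(K × B, ℝ)) = J g := by
      intro g
      rw [heqv]
      exact LinearEquiv.ofInjective_apply J g
    have hpmle : ∀ y : ↥pm.domain, pm y ≤ NN y := by
      intro y
      have hy : (y : C(K × B, ℝ)) = J (eqv.symm y) := by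
        have h := hcoe (eqv.symm y)
        rw [eqv.apply_symm_apply] at h
        exact h
      rw [hpmval, hy]
      exact hfg (eqv.symm y)
    obtain ⟨F, hF1, hF2⟩ := exists_extension_of_le_sublinear pm NN hNhom hNadd hpmle
    refine ⟨F, fun g => ?_, hF2⟩
    have hmemg : J g ∈ dom := LinearMap.mem_range_self J g
    have he2 : (⟨J g, hmemg⟩ : ↥dom) = eqv g := Subtype.ext (hcoe g).symm
    have := hF1 ⟨J g, hmemg⟩
    rw [show ((⟨J g, hmemg⟩ : ↥dom) : C(K × B, ℝ)) = J g from rfl] at this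
    rw [this, he2, hpmval, eqv.symm_apply_apply]
  -- positivity of F
  have hFpos : ∀ u : C(K × B, ℝ), (∀ ω, 0 ≤ u ω) → 0 ≤ F u := by
    intro u hu
    have h1 : F (-u) ≤ NN (-u) := hFle (-u)
    have h2 : NN (-u) ≤ 0 := by
      rw [hNN]
      simp only []
      have : sSup (Set.range ⇑(-u)) ≤ 0 := by
        refine csSup_le (hrange_ne _) ?_
        rintro r ⟨p, rfl⟩
        calc (-u) p = -(u p) := rfl
          _ ≤ 0 := neg_nonpos.2 (hu p)
      nlinarith [norm_nonneg f]
    rw [map_neg] at h1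
    linarith
  -- the dominating measure
  letI : MeasurableSpace (K × B) := borel _
  haveI : BorelSpace (K × B) := ⟨rfl⟩
  obtain ⟨μ, hμfin, hμdom⟩ := exists_dominating_measure F hFpos
  -- conclusion by dominated convergence
  set gs : ℕ → C(K, X) := fun n => ContinuousMap.mk (fun t => φ n t • x n)
      ((map_continuous (φ n)).smul continuous_const) with hgs
  show Tendsto (fun n => f (gs n)) atTop (𝓝 0)
  have habsF : ∀ u : C(K × B, ℝ),
      |F u| ≤ F ⟨fun ω => |u ω|, u.continuous.abs⟩ := by
    intro u
    set au : C(K × B, ℝ) := ⟨fun ω => |u ω|, u.continuous.abs⟩ with hau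
    have h1 : 0 ≤ F (au - u) := by
      refine hFpos _ (fun ω => ?_)
      have : (au - u) ω = |u ω| - u ω := rfl
      rw [this]
      linarith [le_abs_self (u ω)]
    have h2 : 0 ≤ F (au + u) := by
      refine hFpos _ (fun ω => ?_)
      have : (au + u) ω = |u ω| + u ω := rfl
      rw [this]
      linarith [neg_abs_le (u ω)]
    rw [map_sub] at h1; rw [map_add] at h2
    rw [abs_le]; constructor <;> linarith
  have hbound : ∀ n, |f (gs n)| ≤ ∫ ω, |(J (gs n)) ω| ∂μ := by
    intro n
    have h1 : F (J (gs n)) = f (gs n) := hFJ _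
    have h2 := habsF (J (gs n))
    rw [h1] at h2
    refine le_trans h2 ?_
    have h3 := hμdom ⟨fun ω => |(J (gs n)) ω|, (J (gs n)).continuous.abs⟩
      (fun ω => abs_nonneg _)
    simpa using h3
  have hptbd : ∀ n (ω : K × B),
      |(J (gs n)) ω| ≤ M * |(WeakDual.toStrongDual (ω.2 : WeakDual ℝ X)) (x n)| := by
    intro n ω
    rw [hJapp]
    have e : (ω.2 : WeakDual ℝ X) (gs n ω.1)
        = φ n ω.1 * (WeakDual.toStrongDual (ω.2 : WeakDual ℝ X)) (x n) := by
      show (ω.2 : WeakDual ℝ X) (φ n ω.1 • x n) = _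
      rw [_root_.map_smul]
      rfl
    rw [e, abs_mul]
    have hb1 : |φ n ω.1| ≤ M := le_trans (by simpa using (φ n).norm_coe_le_norm ω.1) (hφ n)
    exact mul_le_mul_of_nonneg_right hb1 (abs_nonneg _)
  refine squeeze_zero_norm (a := fun n => ∫ ω, |(J (gs n)) ω| ∂μ) (fun n => ?_) ?_
  · rw [Real.norm_eq_abs]; exact hbound n
  · have hdct := tendsto_integral_of_dominated_convergence (μ := μ)
      (F := fun n ω => |(J (gs n)) ω|) (f := fun _ => (0 : ℝ)) (bound := fun _ => M * C₀)
      (fun n => ((J (gs n)).continuous.abs).aestronglyMeasurable)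
      (integrable_const _) ?_ ?_
    · simpa using hdct
    · intro n
      refine Filter.Eventually.of_forall (fun ω => ?_)
      rw [Real.norm_eq_abs, abs_abs]
      refine le_trans (hptbd n ω) ?_
      refine mul_le_mul_of_nonneg_left ?_ hM0
      calc |(WeakDual.toStrongDual (ω.2 : WeakDual ℝ X)) (x n)|
          ≤ ‖WeakDual.toStrongDual (ω.2 : WeakDual ℝ X)‖ * ‖x n‖ :=
            (WeakDual.toStrongDual (ω.2 : WeakDual ℝ X)).le_opNorm _
        _ ≤ 1 * C₀ := mul_le_mul (hψnorm ω.2) (hC₀ n) (norm_nonneg _) zero_le_one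
        _ = C₀ := one_mul _
    · refine Filter.Eventually.of_forall (fun ω => ?_)
      have hψ := hx (WeakDual.toStrongDual (ω.2 : WeakDual ℝ X))
      refine squeeze_zero (fun n => abs_nonneg _) (fun n => hptbd n ω) ?_
      have := (hψ.abs.const_mul M)
      simpa using this
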